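/- Let n ≥ 4 and let Z_i = (X_i, Y_i), i = 1,…,n, be i.i.d. random vectors in ℝ^p × ℝ^q with E‖X₁‖ < ∞ and E‖Y₁‖ < ∞. Then the sample distance covariance admits the U-statistic representation dcov*²(X,Y) = C(n,4)^{-1} · Σ_{i₁<i₂<i₃<i₄} k(Z_{i₁},Z_{i₂},Z_{i₃},Z_{i₄}), where the symmetric kernel k may be taken to be either k(Z₁,Z₂,Z₃,Z₄) = (1/4!)·Σ_{(i₁,…,i₄)} [ ‖X_{i₁}−X_{i₂}‖·‖Y_{i₁}−Y_{i₂}‖ + ‖X_{i₁}−X_{i₂}‖·‖Y_{i₃}−Y_{i₄}‖ − 2‖X_{i₁}−X_{i₂}‖·‖Y_{i₁}−Y_{i₃}‖ ], or k(Z₁,Z₂,Z₃,Z₄) = (1/4!)·Σ_{(i₁,…,i₄)} [ U(X_{i₁},X_{i₂})·V(Y_{i₁},Y_{i₂}) + U(X_{i₁},X_{i₂})·V(Y_{i₃},Y_{i₄}) − 2·U(X_{i₁},X_{i₂})·V(Y_{i₁},Y_{i₃}) ], where in both cases (i₁,…,i₄) ranges over all 24 ordered permutations of (1,2,3,4). 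-/

import Mathlib

open MeasureTheory ProbabilityTheory Matrix

noncomputable section

/-- Euclidean norm of a finite real vector. -/
def vecNorm {ι : Type*} [Fintype ι] (v : ι → ℝ) : ℝ :=
  Real.sqrt (∑ i, v i ^ 2)

/-- Frobenius norm of a real matrix. -/
def mFrob {m n : Type*} [Fintype m] [Fintype n] (A : Matrix m n ℝ) : ℝ :=
  Real.sqrt (∑ i, ∑ j, A i j ^ 2)

/-- Operator (spectral) norm of a real matrix. -/
def mOp {ι : Type*} [Fintype ι] (A : Matrix ι ι ℝ) : ℝ :=
  ⨆ v : ι → ℝ, vecNorm (A *ᵥ v) / vecNorm v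

/-- `U`-centering of an `n × n` matrix. -/
def uCenter {n : ℕ} (A : Matrix (Fin n) (Fin n) ℝ) : Matrix (Fin n) (Fin n) ℝ :=
  Matrix.of fun k l =>
    A k l - (∑ j, A j l) / ((n : ℝ) - 2) - (∑ j, A k j) / ((n : ℝ) - 2)
      + (∑ i, ∑ j, A i j) / (((n : ℝ) - 1) * ((n : ℝ) - 2))

/-- Bias-corrected sample distance covariance. -/
def dcovStar {n p q : ℕ} (X : Fin n → Fin p → ℝ) (Y : Fin n → Fin q → ℝ) : ℝ :=
  ((n : ℝ) * ((n : ℝ) - 3))⁻¹ *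
    ∑ k, ∑ l, if k ≠ l then
        uCenter (Matrix.of fun i j => vecNorm (X i - X j)) k l *
        uCenter (Matrix.of fun i j => vecNorm (Y i - Y j)) k l
      else 0

/-- Generalized kernel sample distance covariance. -/
def dcovStarK {n p q : ℕ} (fX fY : ℝ → ℝ) (gX gY : ℝ)
    (X : Fin n → Fin p → ℝ) (Y : Fin n → Fin q → ℝ) : ℝ :=
  ((n : ℝ) * ((n : ℝ) - 3))⁻¹ *
    ∑ k, ∑ l, if k ≠ l then
        uCenter (Matrix.of fun i j => if i ≠ j then fX (vecNorm (X i - X j) / gX) else 0) k l *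
        uCenter (Matrix.of fun i j => if i ≠ j then fY (vecNorm (Y i - Y j) / gY) else 0) k l
      else 0

/-- Population distance covariance, expressed through three iid copies. -/
def dcovPop {Ω : Type*} [MeasurableSpace Ω] {p q : ℕ} (μ : Measure Ω)
    (X0 X1 X2 : Ω → Fin p → ℝ) (Y0 Y1 Y2 : Ω → Fin q → ℝ) : ℝ :=
  (∫ ω, vecNorm (X0 ω - X1 ω) * vecNorm (Y0 ω - Y1 ω) ∂μ)
    - 2 * (∫ ω, vecNorm (X0 ω - X1 ω) * vecNorm (Y0 ω - Y2 ω) ∂μ)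
    + (∫ ω, vecNorm (X0 ω - X1 ω) ∂μ) * (∫ ω, vecNorm (Y0 ω - Y1 ω) ∂μ)

/-- Population generalized kernel distance covariance. -/
def dcovPopK {Ω : Type*} [MeasurableSpace Ω] {p q : ℕ} (μ : Measure Ω)
    (fX fY : ℝ → ℝ) (gX gY : ℝ)
    (X0 X1 X2 : Ω → Fin p → ℝ) (Y0 Y1 Y2 : Ω → Fin q → ℝ) : ℝ :=
  (∫ ω, fX (vecNorm (X0 ω - X1 ω) / gX) * fY (vecNorm (Y0 ω - Y1 ω) / gY) ∂μ)
    - 2 * (∫ ω, fX (vecNorm (X0 ω - X1 ω) / gX) * fY (vecNorm (Y0 ω - Y2 ω) / gY) ∂μ)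
    + (∫ ω, fX (vecNorm (X0 ω - X1 ω) / gX) ∂μ) * (∫ ω, fY (vecNorm (Y0 ω - Y1 ω) / gY) ∂μ)

/-- `W` is a centered Gaussian random vector with covariance matrix `S`:
every linear functional of `W` is a centered one-dimensional Gaussian with the
corresponding variance. -/
def IsCenteredGaussian {Ω : Type*} [MeasurableSpace Ω] (μ : Measure Ω)
    {ι : Type*} [Fintype ι] (W : Ω → ι → ℝ) (S : Matrix ι ι ℝ) : Prop :=
  ∀ a : ι → ℝ,
    Measure.map (fun ω => ∑ i, a i * W ω i) μ =
      gaussianReal 0 (Real.toNNReal (a ⬝ᵥ (S *ᵥ a)))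

/-- Kolmogorov distance between (the law of) a real random variable and `N(0,1)`. -/
def dKolN {Ω : Type*} [MeasurableSpace Ω] (μ : Measure Ω) (f : Ω → ℝ) : ℝ :=
  ⨆ t : ℝ, |(μ {ω | f ω ≤ t}).toReal - ((gaussianReal 0 1) (Set.Iic t)).toReal|

def sigBar1 {p q : ℕ} (n : ℕ) (SX : Matrix (Fin p) (Fin p) ℝ)
    (SXY : Matrix (Fin p) (Fin q) ℝ) (SY : Matrix (Fin q) (Fin q) ℝ) : ℝ :=
  (4 / ((n : ℝ) * (2 * SX.trace) * (2 * SY.trace))) *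
    (mFrob (SXY * SXYᵀ) ^ 2 + (SXY * SY * SXYᵀ * SX).trace
      + mFrob SXY ^ 4 * mFrob SX ^ 2 / (2 * (2 * SX.trace) ^ 2)
      + mFrob SXY ^ 4 * mFrob SY ^ 2 / (2 * (2 * SY.trace) ^ 2)
      - 2 * mFrob SXY ^ 2 / (2 * SX.trace) * (SXY * SXYᵀ * SX).trace
      - 2 * mFrob SXY ^ 2 / (2 * SY.trace) * (SXYᵀ * SXY * SY).trace
      + mFrob SXY ^ 6 / ((2 * SX.trace) * (2 * SY.trace)))

def sigBar2 {p q : ℕ} (n : ℕ) (SX : Matrix (Fin p) (Fin p) ℝ)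
    (SXY : Matrix (Fin p) (Fin q) ℝ) (SY : Matrix (Fin q) (Fin q) ℝ) : ℝ :=
  (2 / ((n : ℝ) * ((n : ℝ) - 1) * (2 * SX.trace) * (2 * SY.trace))) *
    (mFrob SX ^ 2 * mFrob SY ^ 2 + mFrob SXY ^ 4)

def sigBar {p q : ℕ} (n : ℕ) (SX : Matrix (Fin p) (Fin p) ℝ)
    (SXY : Matrix (Fin p) (Fin q) ℝ) (SY : Matrix (Fin q) (Fin q) ℝ) : ℝ :=
  sigBar1 n SX SXY SY + sigBar2 n SX SXY SY

def sigBar1X {p : ℕ} (n : ℕ) (SX : Matrix (Fin p) (Fin p) ℝ) : ℝ :=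
  (1 / ((n : ℝ) * SX.trace ^ 2)) *
    (2 * mFrob (SX * SX) ^ 2 + mFrob SX ^ 6 / (2 * SX.trace ^ 2)
      - 2 * mFrob SX ^ 2 * (SX * SX * SX).trace / SX.trace)

def sigBar2X {p : ℕ} (n : ℕ) (SX : Matrix (Fin p) (Fin p) ℝ) : ℝ :=
  mFrob SX ^ 4 / ((n : ℝ) * ((n : ℝ) - 1) * SX.trace ^ 2)

def sigBarX {p : ℕ} (n : ℕ) (SX : Matrix (Fin p) (Fin p) ℝ) : ℝ :=
  sigBar1X n SX + sigBar2X n SX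

/-- The corrected first-order Hoeffding main term `ḡ₁`. -/
def gbar1 {p q : ℕ} (SX : Matrix (Fin p) (Fin p) ℝ) (SXY : Matrix (Fin p) (Fin q) ℝ)
    (SY : Matrix (Fin q) (Fin q) ℝ) (x : Fin p → ℝ) (y : Fin q → ℝ) : ℝ :=
  (1 / (2 * Real.sqrt (2 * SX.trace) * Real.sqrt (2 * SY.trace))) *
    ((x ⬝ᵥ (SXY *ᵥ y) - mFrob SXY ^ 2)
      - mFrob SXY ^ 2 / (2 * (2 * SX.trace)) * (vecNorm x ^ 2 - SX.trace)
      - mFrob SXY ^ 2 / (2 * (2 * SY.trace)) * (vecNorm y ^ 2 - SY.trace))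

/-- The second-order Hoeffding main term `ḡ₂`. -/
def gbar2 {p q : ℕ} (SX : Matrix (Fin p) (Fin p) ℝ) (SXY : Matrix (Fin p) (Fin q) ℝ)
    (SY : Matrix (Fin q) (Fin q) ℝ) (x1 : Fin p → ℝ) (y1 : Fin q → ℝ)
    (x2 : Fin p → ℝ) (y2 : Fin q → ℝ) : ℝ :=
  (1 / (6 * Real.sqrt (2 * SX.trace) * Real.sqrt (2 * SY.trace))) *
    (((x1 ⬝ᵥ x2) * (y1 ⬝ᵥ y2) - x1 ⬝ᵥ (SXY *ᵥ y1) - x2 ⬝ᵥ (SXY *ᵥ y2) + mFrob SXY ^ 2)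
      - (x1 ⬝ᵥ (SXY *ᵥ y2) + x2 ⬝ᵥ (SXY *ᵥ y1)))

/-- Symmetrization over all 24 ordered permutations of a 4-tuple, of the kernel
built from bivariate functions `U` and `V`. -/
def symKer {p q : ℕ} (U : (Fin p → ℝ) → (Fin p → ℝ) → ℝ)
    (V : (Fin q → ℝ) → (Fin q → ℝ) → ℝ)
    (x : Fin 4 → Fin p → ℝ) (y : Fin 4 → Fin q → ℝ) : ℝ :=
  (1 / 24 : ℝ) * ∑ σ : Equiv.Perm (Fin 4),
    (U (x (σ 0)) (x (σ 1)) * V (y (σ 0)) (y (σ 1))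
      + U (x (σ 0)) (x (σ 1)) * V (y (σ 2)) (y (σ 3))
      - 2 * (U (x (σ 0)) (x (σ 1)) * V (y (σ 0)) (y (σ 2))))

/-- The symmetric kernel `k` of the `U`-statistic representation. -/
def kerK {p q : ℕ} (x : Fin 4 → Fin p → ℝ) (y : Fin 4 → Fin q → ℝ) : ℝ :=
  symKer (fun a b => vecNorm (a - b)) (fun a b => vecNorm (a - b)) x y

def kMean {Ω : Type*} [MeasurableSpace Ω] {p q : ℕ} (μ : Measure Ω)
    (X : Fin 4 → Ω → Fin p → ℝ) (Y : Fin 4 → Ω → Fin q → ℝ) : ℝ :=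
  ∫ ω, kerK (fun j => X j ω) (fun j => Y j ω) ∂μ

def kp1 {Ω : Type*} [MeasurableSpace Ω] {p q : ℕ} (μ : Measure Ω)
    (X : Fin 4 → Ω → Fin p → ℝ) (Y : Fin 4 → Ω → Fin q → ℝ)
    (x1 : Fin p → ℝ) (y1 : Fin q → ℝ) : ℝ :=
  ∫ ω, kerK ![x1, X 1 ω, X 2 ω, X 3 ω] ![y1, Y 1 ω, Y 2 ω, Y 3 ω] ∂μ

def kp2 {Ω : Type*} [MeasurableSpace Ω] {p q : ℕ} (μ : Measure Ω)
    (X : Fin 4 → Ω → Fin p → ℝ) (Y : Fin 4 → Ω → Fin q → ℝ)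
    (x1 : Fin p → ℝ) (y1 : Fin q → ℝ) (x2 : Fin p → ℝ) (y2 : Fin q → ℝ) : ℝ :=
  ∫ ω, kerK ![x1, x2, X 2 ω, X 3 ω] ![y1, y2, Y 2 ω, Y 3 ω] ∂μ

def kp3 {Ω : Type*} [MeasurableSpace Ω] {p q : ℕ} (μ : Measure Ω)
    (X : Fin 4 → Ω → Fin p → ℝ) (Y : Fin 4 → Ω → Fin q → ℝ)
    (x1 : Fin p → ℝ) (y1 : Fin q → ℝ) (x2 : Fin p → ℝ) (y2 : Fin q → ℝ)
    (x3 : Fin p → ℝ) (y3 : Fin q → ℝ) : ℝ :=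
  ∫ ω, kerK ![x1, x2, x3, X 3 ω] ![y1, y2, y3, Y 3 ω] ∂μ

/-- First-order Hoeffding projection `g₁`. -/
def hg1 {Ω : Type*} [MeasurableSpace Ω] {p q : ℕ} (μ : Measure Ω)
    (X : Fin 4 → Ω → Fin p → ℝ) (Y : Fin 4 → Ω → Fin q → ℝ)
    (x1 : Fin p → ℝ) (y1 : Fin q → ℝ) : ℝ :=
  kp1 μ X Y x1 y1 - kMean μ X Y

/-- Second-order Hoeffding projection `g₂`. -/
def hg2 {Ω : Type*} [MeasurableSpace Ω] {p q : ℕ} (μ : Measure Ω)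
    (X : Fin 4 → Ω → Fin p → ℝ) (Y : Fin 4 → Ω → Fin q → ℝ)
    (x1 : Fin p → ℝ) (y1 : Fin q → ℝ) (x2 : Fin p → ℝ) (y2 : Fin q → ℝ) : ℝ :=
  kp2 μ X Y x1 y1 x2 y2 - kp1 μ X Y x1 y1 - kp1 μ X Y x2 y2 + kMean μ X Y

/-- Third-order Hoeffding projection `g₃`. -/
def hg3 {Ω : Type*} [MeasurableSpace Ω] {p q : ℕ} (μ : Measure Ω)
    (X : Fin 4 → Ω → Fin p → ℝ) (Y : Fin 4 → Ω → Fin q → ℝ)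
    (x1 : Fin p → ℝ) (y1 : Fin q → ℝ) (x2 : Fin p → ℝ) (y2 : Fin q → ℝ)
    (x3 : Fin p → ℝ) (y3 : Fin q → ℝ) : ℝ :=
  kp3 μ X Y x1 y1 x2 y2 x3 y3 - kMean μ X Y
    - (hg1 μ X Y x1 y1 + hg1 μ X Y x2 y2 + hg1 μ X Y x3 y3)
    - (hg2 μ X Y x1 y1 x2 y2 + hg2 μ X Y x1 y1 x3 y3 + hg2 μ X Y x2 y2 x3 y3)

/-- Fourth-order Hoeffding projection `g₄`. -/
def hg4 {Ω : Type*} [MeasurableSpace Ω] {p q : ℕ} (μ : Measure Ω)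
    (X : Fin 4 → Ω → Fin p → ℝ) (Y : Fin 4 → Ω → Fin q → ℝ)
    (x1 : Fin p → ℝ) (y1 : Fin q → ℝ) (x2 : Fin p → ℝ) (y2 : Fin q → ℝ)
    (x3 : Fin p → ℝ) (y3 : Fin q → ℝ) (x4 : Fin p → ℝ) (y4 : Fin q → ℝ) : ℝ :=
  kerK ![x1, x2, x3, x4] ![y1, y2, y3, y4] - kMean μ X Y
    - (hg1 μ X Y x1 y1 + hg1 μ X Y x2 y2 + hg1 μ X Y x3 y3 + hg1 μ X Y x4 y4)
    - (hg2 μ X Y x1 y1 x2 y2 + hg2 μ X Y x1 y1 x3 y3 + hg2 μ X Y x1 y1 x4 y4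
        + hg2 μ X Y x2 y2 x3 y3 + hg2 μ X Y x2 y2 x4 y4 + hg2 μ X Y x3 y3 x4 y4)
    - (hg3 μ X Y x1 y1 x2 y2 x3 y3 + hg3 μ X Y x1 y1 x2 y2 x4 y4
        + hg3 μ X Y x1 y1 x3 y3 x4 y4 + hg3 μ X Y x2 y2 x3 y3 x4 y4)

/-- The normalized squared-distance fluctuation `L_X`. -/
def Lfun {p : ℕ} (t2 : ℝ) (x1 x2 : Fin p → ℝ) : ℝ :=
  (vecNorm (x1 - x2) ^ 2 - t2) / t2

/-- The square-root remainder `h(u) = √(1+u) − 1 − u/2`. -/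
def hRem (u : ℝ) : ℝ := Real.sqrt (1 + u) - 1 - u / 2

/-- Double-centered remainder `R̄`. -/
def Rbar {Ω : Type*} [MeasurableSpace Ω] {p : ℕ} (μ : Measure Ω) (t2 : ℝ)
    (X0 X1 : Ω → Fin p → ℝ) (x1 x2 : Fin p → ℝ) : ℝ :=
  hRem (Lfun t2 x1 x2) - (∫ ω, hRem (Lfun t2 x1 (X0 ω)) ∂μ)
    - (∫ ω, hRem (Lfun t2 (X0 ω) x2) ∂μ) + ∫ ω, hRem (Lfun t2 (X0 ω) (X1 ω)) ∂μ

/-- The kernel assumption (Assumption 2.2 of the paper). -/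
def KernelAssumption (f : ℝ → ℝ) : Prop :=
  ContDiffOn ℝ 4 f (Set.Ioi 0) ∧
  (∀ M' : ℝ, 0 < M' → ∃ B : ℝ, ∀ x ∈ Set.Ico (0 : ℝ) M', |f x| ≤ B) ∧
  (∀ ε : ℝ, 0 < ε → ∃ Cε : ℝ, ∀ l ∈ Finset.Icc 1 4, ∀ x : ℝ, ε ≤ x →
    |iteratedDeriv l f x| ≤ Cε) ∧
  (∀ ε : ℝ, 0 < ε → ∃ cε : ℝ, 0 < cε ∧ ∀ x ∈ Set.Ioo ε ε⁻¹, cε ≤ |deriv f x|) ∧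
  (∃ r : ℝ, 0 < r ∧ ∃ B δ : ℝ, 0 < δ ∧ ∀ x ∈ Set.Ioo (0 : ℝ) δ, ∀ l ∈ Finset.Icc 1 4,
    x ^ r * |iteratedDeriv l f x| ≤ B)


namespace SDC
open Finset

variable {n : ℕ}

def rS (A : Fin n → Fin n → ℝ) (i : Fin n) : ℝ := ∑ j, A i j
def tS (A : Fin n → Fin n → ℝ) : ℝ := ∑ i, ∑ j, A i j
def tT (A B : Fin n → Fin n → ℝ) : ℝ := ∑ i, ∑ j, A i j * B i j
def qQ (A B : Fin n → Fin n → ℝ) : ℝ := ∑ i, rS A i * rS B i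

theorem tS_eq (A : Fin n → Fin n → ℝ) : tS A = ∑ i, rS A i := rfl

theorem centerExpand (hn : 4 ≤ n) (A B : Fin n → Fin n → ℝ)
    (hAs : ∀ i j, A i j = A j i) (hA0 : ∀ i, A i i = 0)
    (hBs : ∀ i j, B i j = B j i) (hB0 : ∀ i, B i i = 0) :
    (∑ k, ∑ l, if k ≠ l then uCenter (Matrix.of A) k l * uCenter (Matrix.of B) k l else 0)
    = tT A B - 2 * qQ A B / ((n:ℝ)-2) + tS A * tS B / (((n:ℝ)-1) * ((n:ℝ)-2)) := by
  have hn' : (4:ℝ) ≤ (n:ℝ) := by exact_mod_cast hn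
  have hc : ((n:ℝ) - 2) ≠ 0 := by nlinarith
  have he : (((n:ℝ)-1) * ((n:ℝ)-2)) ≠ 0 := by
    have : ((n:ℝ) - 1) ≠ 0 := by nlinarith
    exact mul_ne_zero this hc
  -- entrywise formula for uCenter, using symmetry
  have hG : ∀ (C : Fin n → Fin n → ℝ), (∀ i j, C i j = C j i) → ∀ k l,
      uCenter (Matrix.of C) k l = C k l - rS C l / ((n:ℝ)-2) - rS C k / ((n:ℝ)-2)
        + tS C / (((n:ℝ)-1) * ((n:ℝ)-2)) := by
    intro C hCs k l
    show C k l - (∑ j, C j l) / ((n:ℝ)-2) - (∑ j, C k j) / ((n:ℝ)-2)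
        + (∑ i, ∑ j, C i j) / (((n:ℝ)-1) * ((n:ℝ)-2)) = _
    have h1 : (∑ j, C j l) = rS C l := Finset.sum_congr rfl fun j _ => hCs j l
    rw [h1]; rfl
  -- row sums of uCentered matrix
  have hGrow : ∀ (C : Fin n → Fin n → ℝ), (∀ i j, C i j = C j i) → (∀ i, C i i = 0) → ∀ k,
      (∑ l, uCenter (Matrix.of C) k l) = uCenter (Matrix.of C) k k := by
    intro C hCs hC0 k
    simp only [hG C hCs]
    rw [Finset.sum_add_distrib, Finset.sum_sub_distrib, Finset.sum_sub_distrib]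
    have h1 : (∑ l, C k l) = rS C k := rfl
    have h2 : (∑ l, rS C l / ((n:ℝ)-2)) = tS C / ((n:ℝ)-2) := by
      rw [← Finset.sum_div, ← tS_eq]
    have h3 : (∑ _l : Fin n, rS C k / ((n:ℝ)-2)) = n * (rS C k / ((n:ℝ)-2)) := by
      rw [Finset.sum_const, card_univ, Fintype.card_fin, nsmul_eq_mul]
    have h4 : (∑ _l : Fin n, tS C / (((n:ℝ)-1) * ((n:ℝ)-2))) =
        n * (tS C / (((n:ℝ)-1) * ((n:ℝ)-2))) := by
      rw [Finset.sum_const, card_univ, Fintype.card_fin, nsmul_eq_mul]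
    rw [h1, h2, h3, h4, hC0 k]
    have hn1 : ((n:ℝ) - 1) ≠ 0 := by nlinarith
    field_simp
    ring
  have hGsym : ∀ (C : Fin n → Fin n → ℝ), (∀ i j, C i j = C j i) → ∀ k l,
      uCenter (Matrix.of C) k l = uCenter (Matrix.of C) l k := by
    intro C hCs k l
    rw [hG C hCs, hG C hCs, hCs k l]
    ring
  have hGcol : ∀ (C : Fin n → Fin n → ℝ), (∀ i j, C i j = C j i) → (∀ i, C i i = 0) → ∀ l,
      (∑ k, uCenter (Matrix.of C) k l) = uCenter (Matrix.of C) l l := by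
    intro C hCs hC0 l
    rw [Finset.sum_congr rfl fun k _ => hGsym C hCs k l, hGrow C hCs hC0 l]
  set G := fun k l => uCenter (Matrix.of A) k l with hGdef
  set H := fun k l => uCenter (Matrix.of B) k l with hHdef
  -- remove the diagonal restriction
  have hstep : ∀ k, (∑ l, if k ≠ l then G k l * H k l else 0)
      = (∑ l, G k l * H k l) - G k k * H k k := by
    intro k
    have : ∀ l, (if k ≠ l then G k l * H k l else 0)
        = G k l * H k l - (if l = k then G k l * H k l else 0) := by
      intro l
      by_cases h : k = l
      · subst h; simp
      · rw [if_pos h, if_neg (Ne.symm h)]; ring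
    rw [Finset.sum_congr rfl fun l _ => this l, Finset.sum_sub_distrib]
    congr 1
    rw [Finset.sum_ite_eq' univ k (fun l => G k l * H k l)]
    simp
  have main : (∑ k, ∑ l, if k ≠ l then G k l * H k l else 0)
      = ∑ k, ∑ l, G k l * B k l := by
    rw [Finset.sum_congr rfl fun k _ => hstep k, Finset.sum_sub_distrib]
    have hexp : ∀ k l, G k l * H k l = G k l * B k l - G k l * rS B l / ((n:ℝ)-2)
        - G k l * rS B k / ((n:ℝ)-2) + G k l * (tS B / (((n:ℝ)-1) * ((n:ℝ)-2))) := by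
      intro k l
      rw [hHdef]
      show G k l * uCenter (Matrix.of B) k l = _
      rw [hG B hBs]
      ring
    have hsplit : (∑ k, ∑ l, G k l * H k l)
        = (∑ k, ∑ l, G k l * B k l) - (∑ l, G l l * rS B l / ((n:ℝ)-2))
          - (∑ k, G k k * rS B k / ((n:ℝ)-2))
          + (∑ k, G k k * (tS B / (((n:ℝ)-1) * ((n:ℝ)-2)))) := by
      calc (∑ k, ∑ l, G k l * H k l)
          = ∑ k, ((∑ l, G k l * B k l) - (∑ l, G k l * rS B l / ((n:ℝ)-2))
            - (∑ l, G k l * rS B k / ((n:ℝ)-2))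
            + (∑ l, G k l * (tS B / (((n:ℝ)-1) * ((n:ℝ)-2))))) := by
            refine Finset.sum_congr rfl fun k _ => ?_
            rw [Finset.sum_congr rfl fun l _ => hexp k l]
            rw [Finset.sum_add_distrib, Finset.sum_sub_distrib, Finset.sum_sub_distrib]
        _ = (∑ k, ∑ l, G k l * B k l) - (∑ k, ∑ l, G k l * rS B l / ((n:ℝ)-2))
            - (∑ k, ∑ l, G k l * rS B k / ((n:ℝ)-2))
            + (∑ k, ∑ l, G k l * (tS B / (((n:ℝ)-1) * ((n:ℝ)-2)))) := by
            rw [Finset.sum_add_distrib, Finset.sum_sub_distrib, Finset.sum_sub_distrib]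
        _ = (∑ k, ∑ l, G k l * B k l) - (∑ l, G l l * rS B l / ((n:ℝ)-2))
          - (∑ k, G k k * rS B k / ((n:ℝ)-2))
          + (∑ k, G k k * (tS B / (((n:ℝ)-1) * ((n:ℝ)-2)))) := by
            congr 1
            · congr 1
              · congr 1
                rw [Finset.sum_comm]
                refine Finset.sum_congr rfl fun l _ => ?_
                rw [← Finset.sum_div, ← Finset.sum_mul, hGcol A hAs hA0 l]
              · refine Finset.sum_congr rfl fun k _ => ?_
                rw [← Finset.sum_div, ← Finset.sum_mul, hGrow A hAs hA0 k]
            · refine Finset.sum_congr rfl fun k _ => ?_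
              rw [← Finset.sum_mul, hGrow A hAs hA0 k]
    rw [hsplit]
    have hHdiag : ∀ k, H k k = 0 - rS B k / ((n:ℝ)-2) - rS B k / ((n:ℝ)-2)
        + tS B / (((n:ℝ)-1) * ((n:ℝ)-2)) := by
      intro k
      rw [hHdef]
      show uCenter (Matrix.of B) k k = _
      rw [hG B hBs, hB0 k]
    have : (∑ l, G l l * rS B l / ((n:ℝ)-2)) + (∑ k, G k k * rS B k / ((n:ℝ)-2))
        - (∑ k, G k k * (tS B / (((n:ℝ)-1) * ((n:ℝ)-2)))) + (∑ k, G k k * H k k) = 0 := by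
      rw [← Finset.sum_add_distrib, ← Finset.sum_sub_distrib, ← Finset.sum_add_distrib]
      apply Finset.sum_eq_zero
      intro k _
      rw [hHdiag k]
      ring
    linarith [this]
  rw [main]
  -- now expand G
  have hexp2 : ∀ k l, G k l * B k l = A k l * B k l - rS A l * B k l / ((n:ℝ)-2)
      - rS A k * B k l / ((n:ℝ)-2) + (tS A / (((n:ℝ)-1) * ((n:ℝ)-2))) * B k l := by
    intro k l
    rw [hGdef]
    show uCenter (Matrix.of A) k l * B k l = _
    rw [hG A hAs]
    ring
  have colB : ∀ l, (∑ k, B k l) = rS B l := fun l => Finset.sum_congr rfl fun k _ => hBs k l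
  calc (∑ k, ∑ l, G k l * B k l)
      = (∑ k, ∑ l, A k l * B k l) - (∑ k, ∑ l, rS A l * B k l / ((n:ℝ)-2))
        - (∑ k, ∑ l, rS A k * B k l / ((n:ℝ)-2))
        + (∑ k, ∑ l, (tS A / (((n:ℝ)-1) * ((n:ℝ)-2))) * B k l) := by
        rw [Finset.sum_congr rfl fun k (_ : k ∈ univ) => Finset.sum_congr rfl fun l _ => hexp2 k l]
        simp only [Finset.sum_add_distrib, Finset.sum_sub_distrib]
    _ = tT A B - qQ A B / ((n:ℝ)-2) - qQ A B / ((n:ℝ)-2)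
        + (tS A / (((n:ℝ)-1) * ((n:ℝ)-2))) * tS B := by
        congr 1
        · congr 1
          · congr 1
            rw [Finset.sum_comm]
            have h5 : ∀ y, (∑ x, rS A y * B x y / ((n:ℝ)-2)) = rS A y * rS B y / ((n:ℝ)-2) := by
              intro y
              rw [← Finset.sum_div, ← Finset.mul_sum, colB y]
            rw [Finset.sum_congr rfl fun y _ => h5 y, ← Finset.sum_div]
            rfl
          · have h6 : ∀ k, (∑ l, rS A k * B k l / ((n:ℝ)-2)) = rS A k * rS B k / ((n:ℝ)-2) := by
              intro k
              rw [← Finset.sum_div, ← Finset.mul_sum]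
              rfl
            rw [Finset.sum_congr rfl fun k _ => h6 k, ← Finset.sum_div]
            rfl
        · have h7 : ∀ k, (∑ l, tS A / (((n:ℝ)-1) * ((n:ℝ)-2)) * B k l)
              = tS A / (((n:ℝ)-1) * ((n:ℝ)-2)) * rS B k := by
            intro k
            rw [← Finset.mul_sum]
            rfl
          rw [Finset.sum_congr rfl fun k _ => h7 k, ← Finset.mul_sum]
          rfl
    _ = tT A B - 2 * qQ A B / ((n:ℝ)-2) + tS A * tS B / (((n:ℝ)-1) * ((n:ℝ)-2)) := by ring
theorem sum_ne_one (i1 : Fin n) (F : Fin n → ℝ) :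
    (∑ j, if j ≠ i1 then F j else 0) = (∑ j, F j) - F i1 := by
  have h : ∀ j, (if j ≠ i1 then F j else 0) = F j - (if j = i1 then F j else 0) := by
    intro j; by_cases h : j = i1
    · subst h; simp
    · rw [if_pos h, if_neg h]; ring
  rw [Finset.sum_congr rfl fun j _ => h j, Finset.sum_sub_distrib,
    Finset.sum_ite_eq' univ i1 F]
  simp

theorem sum_ne_two (i1 i2 : Fin n) (h12 : i1 ≠ i2) (F : Fin n → ℝ) :
    (∑ j, if j ≠ i1 ∧ j ≠ i2 then F j else 0) = (∑ j, F j) - F i1 - F i2 := by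
  have h : ∀ j, (if j ≠ i1 ∧ j ≠ i2 then F j else 0)
      = (if j ≠ i1 then F j else 0) - (if j = i2 then F j else 0) := by
    intro j
    by_cases h1 : j = i1
    · subst h1; rw [if_neg (by simp), if_neg (by simp), if_neg h12]; ring
    · by_cases h2 : j = i2
      · subst h2; rw [if_neg (by simp [h1]), if_pos h1, if_pos rfl]; ring
      · rw [if_pos ⟨h1, h2⟩, if_pos h1, if_neg h2]; ring
  rw [Finset.sum_congr rfl fun j _ => h j, Finset.sum_sub_distrib, sum_ne_one,
    Finset.sum_ite_eq' univ i2 F]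
  simp

theorem sum_ne_three (i1 i2 i3 : Fin n) (h12 : i1 ≠ i2) (h13 : i1 ≠ i3) (h23 : i2 ≠ i3)
    (F : Fin n → ℝ) :
    (∑ j, if j ≠ i1 ∧ j ≠ i2 ∧ j ≠ i3 then F j else 0)
      = (∑ j, F j) - F i1 - F i2 - F i3 := by
  have h : ∀ j, (if j ≠ i1 ∧ j ≠ i2 ∧ j ≠ i3 then F j else 0)
      = (if j ≠ i1 ∧ j ≠ i2 then F j else 0) - (if j = i3 then F j else 0) := by
    intro j
    by_cases h1 : j = i1
    · subst h1
      rw [if_neg (by simp), if_neg (by simp), if_neg h13]; ring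
    · by_cases h2 : j = i2
      · subst h2
        rw [if_neg (by simp), if_neg (by simp [h1]), if_neg h23]; ring
      · by_cases h3 : j = i3
        · subst h3; rw [if_neg (by simp [h1, h2]), if_pos ⟨h1, h2⟩, if_pos rfl]; ring
        · rw [if_pos ⟨h1, h2, h3⟩, if_pos ⟨h1, h2⟩, if_neg h3]; ring
  rw [Finset.sum_congr rfl fun j _ => h j, Finset.sum_sub_distrib, sum_ne_two i1 i2 h12,
    Finset.sum_ite_eq' univ i3 F]
  simp

theorem count_two (hn : 4 ≤ n) (i1 i2 : Fin n) (h12 : i1 ≠ i2) :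
    (∑ j : Fin n, if j ≠ i1 ∧ j ≠ i2 then (1:ℝ) else 0) = (n:ℝ) - 2 := by
  rw [sum_ne_two i1 i2 h12]
  simp [Finset.card_univ]
  ring

theorem count_three (hn : 4 ≤ n) (i1 i2 i3 : Fin n) (h12 : i1 ≠ i2) (h13 : i1 ≠ i3)
    (h23 : i2 ≠ i3) :
    (∑ j : Fin n, if j ≠ i1 ∧ j ≠ i2 ∧ j ≠ i3 then (1:ℝ) else 0) = (n:ℝ) - 3 := by
  rw [sum_ne_three i1 i2 i3 h12 h13 h23]
  simp [Finset.card_univ]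
  ring




theorem tS_eq' (A : Fin n → Fin n → ℝ) : tS A = ∑ i, rS A i := rfl

theorem countLemma (hn : 4 ≤ n) (U V : Fin n → Fin n → ℝ)
    (hUs : ∀ i j, U i j = U j i) (hU0 : ∀ i, U i i = 0)
    (hVs : ∀ i j, V i j = V j i) (hV0 : ∀ i, V i i = 0) :
    (∑ i1, ∑ i2, ∑ i3, ∑ i4,
      if ((i1 ≠ i2 ∧ i1 ≠ i3 ∧ i2 ≠ i3) ∧ (i4 ≠ i1 ∧ i4 ≠ i2 ∧ i4 ≠ i3)) then
        U i1 i2 * V i1 i2 + U i1 i2 * V i3 i4 - 2 * (U i1 i2 * V i1 i3) else 0)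
    = ((n:ℝ)-1) * ((n:ℝ)-2) * tT U V - 2 * ((n:ℝ)-1) * qQ U V + tS U * tS V := by
  have colV : ∀ l, (∑ k, V k l) = rS V l := fun l => Finset.sum_congr rfl fun k _ => hVs k l
  have colU : ∀ l, (∑ k, U k l) = rS U l := fun l => Finset.sum_congr rfl fun k _ => hUs k l
  set P : Fin n → Fin n → Fin n → ℝ := fun i1 i2 i3 =>
    ((n:ℝ)-3) * (U i1 i2 * V i1 i2) + U i1 i2 * (rS V i3 - V i3 i1 - V i3 i2)
      - 2*((n:ℝ)-3) * (U i1 i2 * V i1 i3) with hPdef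
  set R : Fin n → Fin n → ℝ := fun i1 i2 =>
    ((n:ℝ)-2)*((n:ℝ)-3)*(U i1 i2 * V i1 i2) + U i1 i2 * tS V
      - (2*((n:ℝ)-3)+2)*(U i1 i2 * rS V i1) - 2*(U i1 i2 * rS V i2)
      + U i1 i2 * V i1 i2 + U i1 i2 * V i2 i1 + 2*((n:ℝ)-3)*(U i1 i2 * V i1 i2) with hRdef
  have step4 : ∀ i1 i2 i3, (∑ i4,
      if ((i1 ≠ i2 ∧ i1 ≠ i3 ∧ i2 ≠ i3) ∧ (i4 ≠ i1 ∧ i4 ≠ i2 ∧ i4 ≠ i3)) then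
        U i1 i2 * V i1 i2 + U i1 i2 * V i3 i4 - 2 * (U i1 i2 * V i1 i3) else 0)
      = if (i1 ≠ i2 ∧ i1 ≠ i3 ∧ i2 ≠ i3) then P i1 i2 i3 else 0 := by
    intro i1 i2 i3
    by_cases hC : (i1 ≠ i2 ∧ i1 ≠ i3 ∧ i2 ≠ i3)
    · rw [if_pos hC]
      have hcong : ∀ i4 : Fin n,
          ((i1 ≠ i2 ∧ i1 ≠ i3 ∧ i2 ≠ i3) ∧ (i4 ≠ i1 ∧ i4 ≠ i2 ∧ i4 ≠ i3))
            ↔ (i4 ≠ i1 ∧ i4 ≠ i2 ∧ i4 ≠ i3) :=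
        fun i4 => ⟨fun h => h.2, fun h => ⟨hC, h⟩⟩
      rw [Finset.sum_congr rfl fun i4 _ => if_congr (hcong i4) rfl rfl]
      rw [sum_ne_three i1 i2 i3 hC.1 hC.2.1 hC.2.2
        (fun i4 => U i1 i2 * V i1 i2 + U i1 i2 * V i3 i4 - 2 * (U i1 i2 * V i1 i3))]
      have hsum : (∑ i4, (U i1 i2 * V i1 i2 + U i1 i2 * V i3 i4 - 2 * (U i1 i2 * V i1 i3)))
          = (n:ℝ) * (U i1 i2 * V i1 i2) + U i1 i2 * rS V i3
            - (n:ℝ) * (2 * (U i1 i2 * V i1 i3)) := by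
        rw [Finset.sum_sub_distrib, Finset.sum_add_distrib, Finset.sum_const, Finset.sum_const,
          ← Finset.mul_sum, card_univ, Fintype.card_fin, nsmul_eq_mul, nsmul_eq_mul]
        rfl
      rw [hsum]
      have h33 := hV0 i3
      simp only [hPdef]
      ring_nf
      rw [h33]
      ring
    · rw [if_neg hC]
      simp only [hC, false_and, if_false]
      exact Finset.sum_const_zero
  have step3 : ∀ i1 i2, (∑ i3, if (i1 ≠ i2 ∧ i1 ≠ i3 ∧ i2 ≠ i3) then P i1 i2 i3 else 0)
      = if i1 ≠ i2 then R i1 i2 else 0 := by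
    intro i1 i2
    have hiff : ∀ i3 : Fin n, (i1 ≠ i2 ∧ i1 ≠ i3 ∧ i2 ≠ i3) ↔ (i1 ≠ i2 ∧ (i3 ≠ i1 ∧ i3 ≠ i2)) := by
      intro i3; constructor
      · rintro ⟨a, b, c⟩; exact ⟨a, b.symm, c.symm⟩
      · rintro ⟨a, b, c⟩; exact ⟨a, b.symm, c.symm⟩
    rw [Finset.sum_congr rfl fun i3 _ => if_congr (hiff i3) rfl rfl]
    by_cases h12 : i1 ≠ i2
    · have hcong : ∀ i3 : Fin n, (i1 ≠ i2 ∧ (i3 ≠ i1 ∧ i3 ≠ i2)) ↔ (i3 ≠ i1 ∧ i3 ≠ i2) :=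
        fun i3 => ⟨fun h => h.2, fun h => ⟨h12, h⟩⟩
      rw [Finset.sum_congr rfl fun i3 (_ : i3 ∈ Finset.univ) => if_congr (hcong i3) rfl rfl]
      rw [if_pos h12, sum_ne_two i1 i2 h12 (fun i3 => P i1 i2 i3)]
      have hsum : (∑ i3, P i1 i2 i3)
          = (n:ℝ) * (((n:ℝ)-3) * (U i1 i2 * V i1 i2))
            + U i1 i2 * (tS V - rS V i1 - rS V i2)
            - 2*((n:ℝ)-3) * (U i1 i2 * rS V i1) := by
        rw [hPdef]
        simp only
        rw [Finset.sum_sub_distrib, Finset.sum_add_distrib, Finset.sum_const,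
          ← Finset.mul_sum, ← Finset.mul_sum, card_univ, Fintype.card_fin, nsmul_eq_mul]
        congr 2
        · rw [Finset.sum_sub_distrib, Finset.sum_sub_distrib, colV i1, colV i2, ← tS_eq']
        · rw [← Finset.mul_sum]
          rfl
      rw [hsum]
      simp only [hPdef, hRdef]
      have e1 := hV0 i1
      have e2 := hV0 i2
      ring_nf
      rw [e1, e2]
      ring
    · rw [if_neg h12]
      simp only [h12, false_and, if_false]
      exact Finset.sum_const_zero
  calc (∑ i1, ∑ i2, ∑ i3, ∑ i4,
      if ((i1 ≠ i2 ∧ i1 ≠ i3 ∧ i2 ≠ i3) ∧ (i4 ≠ i1 ∧ i4 ≠ i2 ∧ i4 ≠ i3)) then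
        U i1 i2 * V i1 i2 + U i1 i2 * V i3 i4 - 2 * (U i1 i2 * V i1 i3) else 0)
      = ∑ i1, ∑ i2, R i1 i2 := by
        refine Finset.sum_congr rfl fun i1 _ => Finset.sum_congr rfl fun i2 _ => ?_
        rw [Finset.sum_congr rfl fun i3 (_ : i3 ∈ univ) => step4 i1 i2 i3, step3 i1 i2]
        by_cases h12 : i1 ≠ i2
        · rw [if_pos h12]
        · rw [if_neg h12]
          push_neg at h12
          subst h12
          rw [hRdef]
          simp [hU0 i1]
    _ = ((n:ℝ)-1) * ((n:ℝ)-2) * tT U V - 2 * ((n:ℝ)-1) * qQ U V + tS U * tS V := by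
        have a1 : (∑ i1, ∑ i2, U i1 i2 * V i1 i2) = tT U V := rfl
        have a2 : (∑ i1, ∑ i2, U i1 i2 * tS V) = tS U * tS V := by
          rw [Finset.sum_congr rfl fun i1 (_ : i1 ∈ Finset.univ) =>
            (Finset.sum_mul Finset.univ (fun i2 => U i1 i2) (tS V)).symm, ← Finset.sum_mul]
          rfl
        have a3 : (∑ i1, ∑ i2, U i1 i2 * rS V i1) = qQ U V := by
          refine Finset.sum_congr rfl fun i1 _ => ?_
          rw [← Finset.sum_mul]
          rfl
        have a4 : (∑ i1, ∑ i2, U i1 i2 * rS V i2) = qQ U V := by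
          rw [Finset.sum_comm]
          refine Finset.sum_congr rfl fun i2 _ => ?_
          rw [← Finset.sum_mul, colU i2]
        have a5 : (∑ i1, ∑ i2, U i1 i2 * V i2 i1) = tT U V := by
          refine Finset.sum_congr rfl fun i1 _ => Finset.sum_congr rfl fun i2 _ => ?_
          rw [hVs i2 i1]
        have expand : ∀ i1 i2, R i1 i2 =
            (((n:ℝ)-2)*((n:ℝ)-3) + 1 + 2*((n:ℝ)-3)) * (U i1 i2 * V i1 i2)
            + U i1 i2 * tS V
            - (2*((n:ℝ)-3)+2)*(U i1 i2 * rS V i1) - 2*(U i1 i2 * rS V i2)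
            + U i1 i2 * V i2 i1 := by
          intro i1 i2; rw [hRdef]; ring
        rw [Finset.sum_congr rfl fun i1 (_ : i1 ∈ univ) =>
          Finset.sum_congr rfl fun i2 _ => expand i1 i2]
        simp only [Finset.sum_add_distrib, Finset.sum_sub_distrib, ← Finset.mul_sum]
        rw [a1, a2, a3, a4, a5]
        ring

theorem comb_swap (A B : Fin n → Fin n → ℝ) :
    ((n:ℝ)-1) * ((n:ℝ)-2) * tT A B - 2 * ((n:ℝ)-1) * qQ A B + tS A * tS B
    = ((n:ℝ)-1) * ((n:ℝ)-2) * tT B A - 2 * ((n:ℝ)-1) * qQ B A + tS B * tS A := by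
  have h1 : tT A B = tT B A := by
    refine Finset.sum_congr rfl fun i _ => Finset.sum_congr rfl fun j _ => mul_comm _ _
  have h2 : qQ A B = qQ B A := Finset.sum_congr rfl fun i _ => mul_comm _ _
  rw [h1, h2]; ring

theorem shiftInvariance (hn : 4 ≤ n) (A V : Fin n → Fin n → ℝ) (φ : Fin n → ℝ)
    (hAs : ∀ i j, A i j = A j i) (hA0 : ∀ i, A i i = 0)
    (hVs : ∀ i j, V i j = V j i) (hV0 : ∀ i, V i i = 0)
    (U' : Fin n → Fin n → ℝ)
    (hU' : ∀ i j, U' i j = if i = j then 0 else A i j + φ i + φ j) :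
    ((n:ℝ)-1) * ((n:ℝ)-2) * tT U' V - 2 * ((n:ℝ)-1) * qQ U' V + tS U' * tS V
    = ((n:ℝ)-1) * ((n:ℝ)-2) * tT A V - 2 * ((n:ℝ)-1) * qQ A V + tS A * tS V := by
  have colV : ∀ l, (∑ k, V k l) = rS V l := fun l => Finset.sum_congr rfl fun k _ => hVs k l
  have hT : tT U' V = tT A V + 2 * (∑ i, φ i * rS V i) := by
    have h : ∀ i j, U' i j * V i j = A i j * V i j + φ i * V i j + φ j * V i j := by
      intro i j
      by_cases hij : i = j
      · subst hij; rw [hU', if_pos rfl, hV0 i]; ring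
      · rw [hU', if_neg hij]; ring
    calc tT U' V = ∑ i, ∑ j, (A i j * V i j + φ i * V i j + φ j * V i j) :=
          Finset.sum_congr rfl fun i _ => Finset.sum_congr rfl fun j _ => h i j
      _ = tT A V + (∑ i, ∑ j, φ i * V i j) + (∑ i, ∑ j, φ j * V i j) := by
          simp only [Finset.sum_add_distrib]
          rfl
      _ = tT A V + (∑ i, φ i * rS V i) + (∑ i, φ i * rS V i) := by
          congr 1
          · congr 1
            exact Finset.sum_congr rfl fun i _ => by rw [← Finset.mul_sum]; rfl
          · rw [Finset.sum_comm]
            exact Finset.sum_congr rfl fun j _ => by rw [← Finset.mul_sum, colV j]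
      _ = tT A V + 2 * (∑ i, φ i * rS V i) := by ring
  have hr : ∀ i, rS U' i = rS A i + ((n:ℝ)-2) * φ i + (∑ j, φ j) := by
    intro i
    have h : ∀ j, U' i j = (A i j + φ i + φ j) - (if j = i then 2 * φ i else 0) := by
      intro j
      by_cases hij : j = i
      · subst hij; rw [hU', if_pos rfl, if_pos rfl, hA0 j]; ring
      · rw [hU', if_neg (fun hh => hij hh.symm), if_neg hij]; ring
    calc rS U' i = ∑ j, ((A i j + φ i + φ j) - (if j = i then 2 * φ i else 0)) :=
          Finset.sum_congr rfl fun j _ => h j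
      _ = (rS A i + (n:ℝ) * φ i + (∑ j, φ j)) - 2 * φ i := by
          rw [Finset.sum_sub_distrib, Finset.sum_add_distrib, Finset.sum_add_distrib,
            Finset.sum_const, Finset.sum_ite_eq' univ i (fun _ => 2 * φ i)]
          simp only [Finset.mem_univ, if_true, Finset.card_univ, Fintype.card_fin,
            nsmul_eq_mul, rS]
          try ring
      _ = rS A i + ((n:ℝ)-2) * φ i + (∑ j, φ j) := by ring
  have hq : qQ U' V = qQ A V + ((n:ℝ)-2) * (∑ i, φ i * rS V i) + (∑ j, φ j) * tS V := by
    calc qQ U' V = ∑ i, (rS A i + ((n:ℝ)-2) * φ i + (∑ j, φ j)) * rS V i :=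
          Finset.sum_congr rfl fun i _ => by rw [hr i]
      _ = qQ A V + ((n:ℝ)-2) * (∑ i, φ i * rS V i) + (∑ j, φ j) * (∑ i, rS V i) := by
          have h : ∀ i, (rS A i + ((n:ℝ)-2) * φ i + (∑ j, φ j)) * rS V i
              = rS A i * rS V i + ((n:ℝ)-2) * (φ i * rS V i) + (∑ j, φ j) * rS V i := by
            intro i; ring
          rw [Finset.sum_congr rfl fun i _ => h i]
          simp only [Finset.sum_add_distrib, ← Finset.mul_sum]
          rfl
      _ = qQ A V + ((n:ℝ)-2) * (∑ i, φ i * rS V i) + (∑ j, φ j) * tS V := by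
          rw [← tS_eq']
  have hs : tS U' = tS A + (2*(n:ℝ)-2) * (∑ j, φ j) := by
    rw [tS_eq' U', Finset.sum_congr rfl fun i (_ : i ∈ univ) => hr i]
    rw [Finset.sum_add_distrib, Finset.sum_add_distrib, ← tS_eq', Finset.sum_const,
      ← Finset.mul_sum]
    simp only [Finset.mem_univ, if_true, Finset.card_univ, Fintype.card_fin, nsmul_eq_mul]
    ring
  rw [hT, hq, hs]
  ring

theorem choose4 (hn : 4 ≤ n) :
    ((n.choose 4 : ℕ) : ℝ) * 24 = (n:ℝ) * ((n:ℝ)-1) * ((n:ℝ)-2) * ((n:ℝ)-3) := by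
  have h := Nat.descFactorial_eq_factorial_mul_choose n 4
  have hd : n.descFactorial 4 = (n-3) * ((n-2) * ((n-1) * n)) := by
    simp [Nat.descFactorial]
  have h2 : (n-3) * ((n-2) * ((n-1) * n)) = 24 * n.choose 4 := by
    rw [← hd, h]; norm_num [Nat.factorial]
  have h' := congrArg (fun m : ℕ => (m : ℝ)) h2
  push_cast [Nat.cast_sub (by omega : 3 ≤ n), Nat.cast_sub (by omega : 2 ≤ n),
    Nat.cast_sub (by omega : 1 ≤ n)] at h'
  linear_combination -h'

theorem sum4 {M : Type*} [AddCommMonoid M] {n : ℕ} (F : (Fin 4 → Fin n) → M) :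
    ∑ u : Fin 4 → Fin n, F u = ∑ i1, ∑ i2, ∑ i3, ∑ i4, F ![i1,i2,i3,i4] := by
  rw [← (Fin.consEquiv (fun _ : Fin 4 => Fin n)).sum_comp, Fintype.sum_prod_type]
  refine Finset.sum_congr rfl fun i1 _ => ?_
  rw [← (Fin.consEquiv (fun _ : Fin 3 => Fin n)).sum_comp, Fintype.sum_prod_type]
  refine Finset.sum_congr rfl fun i2 _ => ?_
  rw [← (Fin.consEquiv (fun _ : Fin 2 => Fin n)).sum_comp, Fintype.sum_prod_type]
  refine Finset.sum_congr rfl fun i3 _ => ?_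
  rw [← (Fin.consEquiv (fun _ : Fin 1 => Fin n)).sum_comp, Fintype.sum_prod_type]
  refine Finset.sum_congr rfl fun i4 _ => ?_
  rw [Fintype.sum_subsingleton _ ![]]
  congr 1

theorem perm_unique {n : ℕ} {v : Fin 4 → Fin n} (hv : Function.Injective v)
    {α β : Equiv.Perm (Fin 4)} (h1 : StrictMono (v ∘ α)) (h2 : StrictMono (v ∘ β)) :
    α = β := by
  have hr : Set.range (v ∘ α) = Set.range (v ∘ β) := by
    rw [Function.Surjective.range_comp α.surjective, Function.Surjective.range_comp β.surjective]
  haveI hwf : WellFoundedLT (Fin 4) := inferInstance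
  have h3 := (@StrictMono.range_inj (Fin 4) (Fin n) _ _ hwf _ _ h1 h2).mp hr
  exact Equiv.ext fun i => hv (congrFun h3 i)

theorem sortLemma {n : ℕ} (g : (Fin 4 → Fin n) → ℝ) :
    ∑ u : Fin 4 → Fin n, (if StrictMono u then ∑ σ : Equiv.Perm (Fin 4), g (u ∘ σ) else 0)
  = ∑ u : Fin 4 → Fin n, (if Function.Injective u then g u else 0) := by
  have step1 : ∀ u : Fin 4 → Fin n,
      (if StrictMono u then ∑ σ : Equiv.Perm (Fin 4), g (u ∘ σ) else 0)
      = ∑ σ : Equiv.Perm (Fin 4), (if StrictMono u then g (u ∘ σ) else 0) := by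
    intro u; split_ifs <;> simp
  simp only [step1]
  rw [Finset.sum_comm]
  have step2 : ∀ σ : Equiv.Perm (Fin 4),
      (∑ u : Fin 4 → Fin n, if StrictMono u then g (u ∘ σ) else 0)
      = ∑ v : Fin 4 → Fin n, if StrictMono (v ∘ σ.symm) then g v else 0 := by
    intro σ
    apply Fintype.sum_equiv (Equiv.arrowCongr σ.symm (Equiv.refl (Fin n)))
    intro u
    have hu : (Equiv.arrowCongr σ.symm (Equiv.refl (Fin n)) u) = u ∘ σ := rfl
    rw [hu]
    have : (u ∘ σ) ∘ σ.symm = u := by funext x; simp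
    rw [this]
  simp only [step2]
  rw [Finset.sum_comm]
  refine Finset.sum_congr rfl fun v _ => ?_
  by_cases hv : Function.Injective v
  · rw [if_pos hv]
    set τ : Equiv.Perm (Fin 4) := Tuple.sort v with hτ
    have hsm : StrictMono (v ∘ τ) :=
      (Tuple.monotone_sort v).strictMono_of_injective (hv.comp τ.injective)
    rw [Finset.sum_eq_single_of_mem τ⁻¹ (Finset.mem_univ _)]
    · have : (τ⁻¹ : Equiv.Perm (Fin 4)).symm = τ := rfl
      rw [this, if_pos hsm]
    · intro σ _ hσ
      rw [if_neg]
      intro hsm'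
      exact hσ (by rw [← perm_unique hv hsm' hsm]; rfl)
  · rw [if_neg hv]
    apply Finset.sum_eq_zero
    intro σ _
    rw [if_neg]
    intro hsm'
    have : v = (v ∘ σ.symm) ∘ σ := by funext x; simp
    exact hv (this ▸ (hsm'.injective.comp σ.injective))

theorem smIff {n : ℕ} (t : Fin 4 → Fin n) :
    (t 0 < t 1 ∧ t 1 < t 2 ∧ t 2 < t 3) ↔ StrictMono t := by
  constructor
  · rintro ⟨a, b, c⟩
    intro i j hij
    fin_cases i <;> fin_cases j <;>
      first
        | exact absurd hij (by decide)
        | exact a | exact b | exact c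
        | exact a.trans b | exact b.trans c | exact (a.trans b).trans c
  · intro h
    exact ⟨h (by decide), h (by decide), h (by decide)⟩

theorem injIff {n : ℕ} (i1 i2 i3 i4 : Fin n) :
    Function.Injective ![i1, i2, i3, i4] ↔
      ((i1 ≠ i2 ∧ i1 ≠ i3 ∧ i2 ≠ i3) ∧ (i4 ≠ i1 ∧ i4 ≠ i2 ∧ i4 ≠ i3)) := by
  have e0 : ![i1, i2, i3, i4] 0 = i1 := rfl
  have e1 : ![i1, i2, i3, i4] 1 = i2 := rfl
  have e2 : ![i1, i2, i3, i4] 2 = i3 := rfl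
  have e3 : ![i1, i2, i3, i4] 3 = i4 := rfl
  constructor
  · intro h
    refine ⟨⟨fun he => ?_, fun he => ?_, fun he => ?_⟩, fun he => ?_, fun he => ?_, fun he => ?_⟩
    · exact absurd (h (a₁ := 0) (a₂ := 1) (by rw [e0, e1]; exact he)) (by decide)
    · exact absurd (h (a₁ := 0) (a₂ := 2) (by rw [e0, e2]; exact he)) (by decide)
    · exact absurd (h (a₁ := 1) (a₂ := 2) (by rw [e1, e2]; exact he)) (by decide)
    · exact absurd (h (a₁ := 3) (a₂ := 0) (by rw [e3, e0]; exact he)) (by decide)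
    · exact absurd (h (a₁ := 3) (a₂ := 1) (by rw [e3, e1]; exact he)) (by decide)
    · exact absurd (h (a₁ := 3) (a₂ := 2) (by rw [e3, e2]; exact he)) (by decide)
  · rintro ⟨⟨a, b, c⟩, d, e, f⟩
    intro x y hxy
    fin_cases x <;> fin_cases y <;> simp_all <;>
      first
        | rfl
        | (exact absurd hxy (by tauto))
        | (exact absurd hxy.symm (by tauto))


set_option maxHeartbeats 2000000 in
theorem master (hn : 4 ≤ n)
    (A B U V : Fin n → Fin n → ℝ)
    (hAs : ∀ i j, A i j = A j i) (hA0 : ∀ i, A i i = 0)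
    (hBs : ∀ i j, B i j = B j i) (hB0 : ∀ i, B i i = 0)
    (φ ψ : Fin n → ℝ)
    (hU : ∀ i j, i ≠ j → U i j = A i j + φ i + φ j)
    (hV : ∀ i j, i ≠ j → V i j = B i j + ψ i + ψ j) :
    ((n:ℝ) * ((n:ℝ) - 3))⁻¹ *
      (∑ k, ∑ l, if k ≠ l then uCenter (Matrix.of A) k l * uCenter (Matrix.of B) k l else 0)
    = ((n.choose 4 : ℝ))⁻¹ * ∑ i1, ∑ i2, ∑ i3, ∑ i4,
        (if i1 < i2 ∧ i2 < i3 ∧ i3 < i4 then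
          (1/24 : ℝ) * ∑ σ : Equiv.Perm (Fin 4),
            (U (![i1,i2,i3,i4] (σ 0)) (![i1,i2,i3,i4] (σ 1))
                * V (![i1,i2,i3,i4] (σ 0)) (![i1,i2,i3,i4] (σ 1))
              + U (![i1,i2,i3,i4] (σ 0)) (![i1,i2,i3,i4] (σ 1))
                * V (![i1,i2,i3,i4] (σ 2)) (![i1,i2,i3,i4] (σ 3))
              - 2 * (U (![i1,i2,i3,i4] (σ 0)) (![i1,i2,i3,i4] (σ 1))
                * V (![i1,i2,i3,i4] (σ 0)) (![i1,i2,i3,i4] (σ 2))))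
         else 0) := by
  have hn' : (4:ℝ) ≤ (n:ℝ) := by exact_mod_cast hn
  -- the kernel as a function of a 4-tuple
  set g : (Fin 4 → Fin n) → ℝ := fun u =>
    U (u 0) (u 1) * V (u 0) (u 1) + U (u 0) (u 1) * V (u 2) (u 3)
      - 2 * (U (u 0) (u 1) * V (u 0) (u 2)) with hg
  -- truncated versions
  set U0 : Fin n → Fin n → ℝ := fun i j => if i = j then 0 else U i j with hU0def
  set V0 : Fin n → Fin n → ℝ := fun i j => if i = j then 0 else V i j with hV0def
  have hU0s : ∀ i j, U0 i j = U0 j i := by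
    intro i j
    by_cases h : i = j
    · subst h; rfl
    · show (if i = j then 0 else U i j) = (if j = i then 0 else U j i)
      rw [if_neg h, if_neg (Ne.symm h), hU i j h, hU j i (Ne.symm h), hAs]
      ring
  have hV0s : ∀ i j, V0 i j = V0 j i := by
    intro i j
    by_cases h : i = j
    · subst h; rfl
    · show (if i = j then 0 else V i j) = (if j = i then 0 else V j i)
      rw [if_neg h, if_neg (Ne.symm h), hV i j h, hV j i (Ne.symm h), hBs]
      ring
  have hU00 : ∀ i, U0 i i = 0 := fun i => if_pos rfl
  have hV00 : ∀ i, V0 i i = 0 := fun i => if_pos rfl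
  have hU0e : ∀ i j, i ≠ j → U0 i j = U i j := fun i j h => if_neg h
  have hV0e : ∀ i j, i ≠ j → V0 i j = V i j := fun i j h => if_neg h
  -- Step 1: pull out the 1/24
  have step1 : (∑ i1, ∑ i2, ∑ i3, ∑ i4,
      (if i1 < i2 ∧ i2 < i3 ∧ i3 < i4 then
          (1/24 : ℝ) * ∑ σ : Equiv.Perm (Fin 4),
            (U (![i1,i2,i3,i4] (σ 0)) (![i1,i2,i3,i4] (σ 1))
                * V (![i1,i2,i3,i4] (σ 0)) (![i1,i2,i3,i4] (σ 1))
              + U (![i1,i2,i3,i4] (σ 0)) (![i1,i2,i3,i4] (σ 1))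
                * V (![i1,i2,i3,i4] (σ 2)) (![i1,i2,i3,i4] (σ 3))
              - 2 * (U (![i1,i2,i3,i4] (σ 0)) (![i1,i2,i3,i4] (σ 1))
                * V (![i1,i2,i3,i4] (σ 0)) (![i1,i2,i3,i4] (σ 2))))
         else 0))
      = (1/24 : ℝ) * ∑ i1, ∑ i2, ∑ i3, ∑ i4,
          (if i1 < i2 ∧ i2 < i3 ∧ i3 < i4 then
            (∑ σ : Equiv.Perm (Fin 4), g (![i1,i2,i3,i4] ∘ σ)) else 0) := by
    rw [Finset.mul_sum]
    refine Finset.sum_congr rfl fun i1 _ => ?_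
    rw [Finset.mul_sum]
    refine Finset.sum_congr rfl fun i2 _ => ?_
    rw [Finset.mul_sum]
    refine Finset.sum_congr rfl fun i3 _ => ?_
    rw [Finset.mul_sum]
    refine Finset.sum_congr rfl fun i4 _ => ?_
    by_cases h : i1 < i2 ∧ i2 < i3 ∧ i3 < i4
    · rw [if_pos h, if_pos h]
      refine congrArg (fun z => (1/24 : ℝ) * z) (Finset.sum_congr rfl fun σ _ => ?_)
      rw [hg]
      rfl
    · rw [if_neg h, if_neg h]; ring
  rw [step1]
  -- Step 2: nested sum to sum over tuples, sorted condition to StrictMono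
  have step2 : (∑ i1, ∑ i2, ∑ i3, ∑ i4,
      (if i1 < i2 ∧ i2 < i3 ∧ i3 < i4 then
        (∑ σ : Equiv.Perm (Fin 4), g (![i1,i2,i3,i4] ∘ σ)) else 0))
      = ∑ u : Fin 4 → Fin n,
          (if StrictMono u then (∑ σ : Equiv.Perm (Fin 4), g (u ∘ σ)) else 0) := by
    refine Eq.trans (?_ : _ = ∑ u : Fin 4 → Fin n,
      (if u 0 < u 1 ∧ u 1 < u 2 ∧ u 2 < u 3 then
        (∑ σ : Equiv.Perm (Fin 4), g (u ∘ σ)) else 0)) ?_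
    · exact (sum4 (fun u => if u 0 < u 1 ∧ u 1 < u 2 ∧ u 2 < u 3 then
        (∑ σ : Equiv.Perm (Fin 4), g (u ∘ σ)) else 0)).symm
    · exact Finset.sum_congr rfl fun u _ => if_congr (smIff u) rfl rfl
  rw [step2, sortLemma g]
  -- Step 3: back to nested sums, with distinctness conditions
  have step3 : (∑ u : Fin 4 → Fin n, (if Function.Injective u then g u else 0))
      = ∑ i1, ∑ i2, ∑ i3, ∑ i4,
          (if ((i1 ≠ i2 ∧ i1 ≠ i3 ∧ i2 ≠ i3) ∧ (i4 ≠ i1 ∧ i4 ≠ i2 ∧ i4 ≠ i3)) then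
            U0 i1 i2 * V0 i1 i2 + U0 i1 i2 * V0 i3 i4 - 2 * (U0 i1 i2 * V0 i1 i3) else 0) := by
    refine Eq.trans (sum4 (fun u => if Function.Injective u then g u else 0)) ?_
    refine Finset.sum_congr rfl fun i1 _ => Finset.sum_congr rfl fun i2 _ =>
      Finset.sum_congr rfl fun i3 _ => Finset.sum_congr rfl fun i4 _ => ?_
    show (if Function.Injective ![i1,i2,i3,i4] then g ![i1,i2,i3,i4] else 0) = _
    rw [if_congr (injIff i1 i2 i3 i4) rfl rfl]
    by_cases h : ((i1 ≠ i2 ∧ i1 ≠ i3 ∧ i2 ≠ i3) ∧ (i4 ≠ i1 ∧ i4 ≠ i2 ∧ i4 ≠ i3))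
    · rw [if_pos h, if_pos h]
      show U i1 i2 * V i1 i2 + U i1 i2 * V i3 i4 - 2 * (U i1 i2 * V i1 i3) = _
      rw [hU0e i1 i2 h.1.1, hV0e i1 i2 h.1.1, hV0e i3 i4 (Ne.symm h.2.2.2),
        hV0e i1 i3 h.1.2.1]
    · rw [if_neg h, if_neg h]
  rw [step3, countLemma hn U0 V0 hU0s hU00 hV0s hV00]
  -- Step 4: shift invariance
  have hU0form : ∀ i j, U0 i j = if i = j then 0 else A i j + φ i + φ j := by
    intro i j
    by_cases h : i = j
    · subst h; rw [hU00, if_pos rfl]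
    · show (if i = j then 0 else U i j) = _
      rw [if_neg h, if_neg h, hU i j h]
  have hV0form : ∀ i j, V0 i j = if i = j then 0 else B i j + ψ i + ψ j := by
    intro i j
    by_cases h : i = j
    · subst h; rw [hV00, if_pos rfl]
    · show (if i = j then 0 else V i j) = _
      rw [if_neg h, if_neg h, hV i j h]
  have c1 := shiftInvariance hn A V0 φ hAs hA0 hV0s hV00 U0 hU0form
  have c2 := comb_swap A V0
  have c3 := shiftInvariance hn B A ψ hBs hB0 hAs hA0 V0 hV0form
  have c4 := comb_swap B A
  rw [c1, c2, c3, c4]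
  -- Step 5: the left-hand side and final arithmetic
  rw [centerExpand hn A B hAs hA0 hBs hB0]
  have hch := choose4 (n := n) hn
  have h0 : (n:ℝ) ≠ 0 := by nlinarith
  have h1 : ((n:ℝ) - 1) ≠ 0 := by nlinarith
  have h2 : ((n:ℝ) - 2) ≠ 0 := by nlinarith
  have h3 : ((n:ℝ) - 3) ≠ 0 := by nlinarith
  have hcpos : 0 < n.choose 4 := Nat.choose_pos hn
  have hcne : ((n.choose 4 : ℕ) : ℝ) ≠ 0 := by positivity
  have hchoose_eq : ((n.choose 4 : ℕ) : ℝ)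
      = (n:ℝ) * ((n:ℝ)-1) * ((n:ℝ)-2) * ((n:ℝ)-3) / 24 := by linarith [hch]
  rw [hchoose_eq]
  field_simp

end SDC

namespace SDC

theorem vecNorm_sub_comm {p : ℕ} (a b : Fin p → ℝ) : vecNorm (a - b) = vecNorm (b - a) := by
  unfold vecNorm
  congr 1
  refine Finset.sum_congr rfl fun i _ => ?_
  have h : (a - b) i = -((b - a) i) := by
    simp [Pi.sub_apply]
  rw [h]
  ring

theorem vecNorm_sub_self {p : ℕ} (a : Fin p → ℝ) : vecNorm (a - a) = 0 := by
  unfold vecNorm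
  simp [sub_self]

end SDC

set_option maxHeartbeats 2000000 in
/-- Proposition 2.1: `U`-statistic representation of the
sample distance covariance, with either the plain kernel or the
double-centered kernel. -/
theorem statement0 {Ω : Type} [MeasurableSpace Ω] (μ : Measure Ω) [IsProbabilityMeasure μ]
    (p q n : ℕ) (hn : 4 ≤ n)
    (X : Fin n → Ω → Fin p → ℝ) (Y : Fin n → Ω → Fin q → ℝ)
    (hXm : ∀ i, Measurable (X i)) (hYm : ∀ i, Measurable (Y i))
    (hindep : iIndepFun (fun i ω => (X i ω, Y i ω)) μ)
    (hident : ∀ i, IdentDistrib (fun ω => (X i ω, Y i ω))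
      (fun ω => (X ⟨0, by omega⟩ ω, Y ⟨0, by omega⟩ ω)) μ μ)
    (hXint : Integrable (fun ω => vecNorm (X ⟨0, by omega⟩ ω)) μ)
    (hYint : Integrable (fun ω => vecNorm (Y ⟨0, by omega⟩ ω)) μ) :
    ∀ ω : Ω,
      (dcovStar (fun i => X i ω) (fun i => Y i ω) =
        ((n.choose 4 : ℝ))⁻¹ * ∑ i1, ∑ i2, ∑ i3, ∑ i4,
          (if i1 < i2 ∧ i2 < i3 ∧ i3 < i4 then
            symKer (fun a b => vecNorm (a - b)) (fun a b => vecNorm (a - b))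
              (fun j => X (![i1, i2, i3, i4] j) ω) (fun j => Y (![i1, i2, i3, i4] j) ω)
          else 0))
      ∧
      (dcovStar (fun i => X i ω) (fun i => Y i ω) =
        ((n.choose 4 : ℝ))⁻¹ * ∑ i1, ∑ i2, ∑ i3, ∑ i4,
          (if i1 < i2 ∧ i2 < i3 ∧ i3 < i4 then
            symKer
              (fun a b => vecNorm (a - b)
                - (∫ ω', vecNorm (a - X ⟨0, by omega⟩ ω') ∂μ)
                - (∫ ω', vecNorm (X ⟨0, by omega⟩ ω' - b) ∂μ)
                + ∫ ω', vecNorm (X ⟨0, by omega⟩ ω' - X ⟨1, by omega⟩ ω') ∂μ)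
              (fun a b => vecNorm (a - b)
                - (∫ ω', vecNorm (a - Y ⟨0, by omega⟩ ω') ∂μ)
                - (∫ ω', vecNorm (Y ⟨0, by omega⟩ ω' - b) ∂μ)
                + ∫ ω', vecNorm (Y ⟨0, by omega⟩ ω' - Y ⟨1, by omega⟩ ω') ∂μ)
              (fun j => X (![i1, i2, i3, i4] j) ω) (fun j => Y (![i1, i2, i3, i4] j) ω)
          else 0)) := by
  intro ω
  have hAs : ∀ i j : Fin n, vecNorm (X i ω - X j ω) = vecNorm (X j ω - X i ω) :=
    fun i j => SDC.vecNorm_sub_comm _ _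
  have hA0 : ∀ i : Fin n, vecNorm (X i ω - X i ω) = 0 := fun i => SDC.vecNorm_sub_self _
  have hBs : ∀ i j : Fin n, vecNorm (Y i ω - Y j ω) = vecNorm (Y j ω - Y i ω) :=
    fun i j => SDC.vecNorm_sub_comm _ _
  have hB0 : ∀ i : Fin n, vecNorm (Y i ω - Y i ω) = 0 := fun i => SDC.vecNorm_sub_self _
  constructor
  · exact SDC.master hn
      (fun i j => vecNorm (X i ω - X j ω)) (fun i j => vecNorm (Y i ω - Y j ω))
      (fun i j => vecNorm (X i ω - X j ω)) (fun i j => vecNorm (Y i ω - Y j ω))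
      hAs hA0 hBs hB0 (fun _ => 0) (fun _ => 0)
      (fun i j _ => by ring) (fun i j _ => by ring)
  · refine SDC.master hn
      (fun i j => vecNorm (X i ω - X j ω)) (fun i j => vecNorm (Y i ω - Y j ω))
      (fun i j => vecNorm (X i ω - X j ω)
        - (∫ ω', vecNorm (X i ω - X ⟨0, by omega⟩ ω') ∂μ)
        - (∫ ω', vecNorm (X ⟨0, by omega⟩ ω' - X j ω) ∂μ)
        + ∫ ω', vecNorm (X ⟨0, by omega⟩ ω' - X ⟨1, by omega⟩ ω') ∂μ)
      (fun i j => vecNorm (Y i ω - Y j ω)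
        - (∫ ω', vecNorm (Y i ω - Y ⟨0, by omega⟩ ω') ∂μ)
        - (∫ ω', vecNorm (Y ⟨0, by omega⟩ ω' - Y j ω) ∂μ)
        + ∫ ω', vecNorm (Y ⟨0, by omega⟩ ω' - Y ⟨1, by omega⟩ ω') ∂μ)
      hAs hA0 hBs hB0
      (fun i => -(∫ ω', vecNorm (X i ω - X ⟨0, by omega⟩ ω') ∂μ)
        + (∫ ω', vecNorm (X ⟨0, by omega⟩ ω' - X ⟨1, by omega⟩ ω') ∂μ) / 2)
      (fun i => -(∫ ω', vecNorm (Y i ω - Y ⟨0, by omega⟩ ω') ∂μ)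
        + (∫ ω', vecNorm (Y ⟨0, by omega⟩ ω' - Y ⟨1, by omega⟩ ω') ∂μ) / 2)
      ?_ ?_
    · intro i j _
      beta_reduce
      have hsym : (∫ ω', vecNorm (X ⟨0, by omega⟩ ω' - X j ω) ∂μ)
          = ∫ ω', vecNorm (X j ω - X ⟨0, by omega⟩ ω') ∂μ := by
        congr 1
        funext ω'
        exact SDC.vecNorm_sub_comm _ _
      rw [hsym]
      ring
    · intro i j _
      beta_reduce
      have hsym : (∫ ω', vecNorm (Y ⟨0, by omega⟩ ω' - Y j ω) ∂μ)
          = ∫ ω', vecNorm (Y j ω - Y ⟨0, by omega⟩ ω') ∂μ := by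
        congr 1
        funext ω'
        exact SDC.vecNorm_sub_comm _ _
      rw [hsym]
      ring

end
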